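/- Let X be a finite set, μ a probability distribution with strictly positive entries, α > 0, and define V(x) = ∑ᵢ μᵢ(xᵢ/μᵢ)^{-α} and π[x]ᵢ = μᵢ(xᵢ/μᵢ)^{-α}/∑ₖ μₖ(xₖ/μₖ)^{-α} on the interior of the probability simplex. Then the directional derivative of V along the vector field x ↦ π[x] − x satisfies ∑ᵢ (∂V/∂xᵢ)(πᵢ[x] − xᵢ) ≤ 0, with equality if and only if x = μ. -/

import Mathlib

theorem stmt_4 {X : Type*} [Fintype X] [DecidableEq X] (μ x : X → ℝ)
    (hμpos : ∀ i, 0 < μ i) (hμsum : ∑ i, μ i = 1)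
    (hxpos : ∀ i, 0 < x i) (hxsum : ∑ i, x i = 1)
    (α : ℝ) (hα : 0 < α) :
    (∑ i, deriv (fun t => ∑ k, μ k * ((Function.update x i t) k / μ k) ^ (-α)) (x i) *
        (μ i * (x i / μ i) ^ (-α) / (∑ k, μ k * (x k / μ k) ^ (-α)) - x i)) ≤ 0 ∧
    ((∑ i, deriv (fun t => ∑ k, μ k * ((Function.update x i t) k / μ k) ^ (-α)) (x i) *
        (μ i * (x i / μ i) ^ (-α) / (∑ k, μ k * (x k / μ k) ^ (-α)) - x i)) = 0 ↔ x = μ) := by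
  classical
  have hr : ∀ i, 0 < x i / μ i := fun i => div_pos (hxpos i) (hμpos i)
  set c : X → ℝ := fun i => (x i / μ i) ^ (-α - 1) with hc
  have hcpos : ∀ i, 0 < c i := fun i => Real.rpow_pos_of_pos (hr i) _
  set S := ∑ k, μ k * (x k / μ k) ^ (-α) with hSdef
  have hgc : ∀ i, μ i * (x i / μ i) ^ (-α) = c i * x i := by
    intro i
    have h1 : (x i / μ i) ^ (-α) = (x i / μ i) ^ (-α - 1) * (x i / μ i) := by
      rw [← Real.rpow_add_one (ne_of_gt (hr i))]
      ring_nf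
    rw [h1, hc]
    have : μ i ≠ 0 := ne_of_gt (hμpos i)
    field_simp
  have hS : S = ∑ i, c i * x i := by
    rw [hSdef]; exact Finset.sum_congr rfl fun i _ => hgc i
  have hSpos : 0 < S := by
    rw [hS]
    apply Finset.sum_pos (fun i _ => mul_pos (hcpos i) (hxpos i))
    by_contra h
    rw [Finset.not_nonempty_iff_eq_empty] at h
    rw [h] at hxsum
    simp at hxsum
  have hSne : S ≠ 0 := ne_of_gt hSpos
  have hderiv : ∀ i, deriv (fun t => ∑ k, μ k * ((Function.update x i t) k / μ k) ^ (-α)) (x i)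
      = -α * c i := by
    intro i
    have hfun : (fun t => ∑ k, μ k * ((Function.update x i t) k / μ k) ^ (-α))
        = (fun t => μ i * (t / μ i) ^ (-α)
            + ∑ k ∈ Finset.univ.erase i, μ k * (x k / μ k) ^ (-α)) := by
      funext t
      rw [← Finset.add_sum_erase _ _ (Finset.mem_univ i)]
      congr 1
      · rw [Function.update_self]
      · exact Finset.sum_congr rfl fun k hk => by
          rw [Function.update_of_ne (Finset.ne_of_mem_erase hk)]
    rw [hfun]
    have h1 : HasDerivAt (fun t : ℝ => t / μ i) (1 / μ i) (x i) := by
      simpa using (hasDerivAt_id (x i)).div_const (μ i)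
    have h2 : HasDerivAt (fun y : ℝ => y ^ (-α)) (-α * (x i / μ i) ^ (-α - 1)) (x i / μ i) := by
      simpa [mul_comm] using
        (Real.hasDerivAt_rpow_const (x := x i / μ i) (p := -α) (Or.inl (ne_of_gt (hr i))))
    have h3 : HasDerivAt (fun t : ℝ => (t / μ i) ^ (-α))
        (-α * (x i / μ i) ^ (-α - 1) * (1 / μ i)) (x i) := by
      have h := h2.comp (x i) h1
      exact h
    have h4 := (h3.const_mul (μ i)).add_const
      (∑ k ∈ Finset.univ.erase i, μ k * (x k / μ k) ^ (-α))
    rw [h4.deriv]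
    have hμne : μ i ≠ 0 := ne_of_gt (hμpos i)
    simp only [hc]
    field_simp
  set T := ∑ i, x i * (c i - S) ^ 2 with hTdef
  have hTeq : T = (∑ i, x i * c i ^ 2) - S ^ 2 := by
    rw [hTdef]
    have h1 : ∀ i ∈ Finset.univ, x i * (c i - S) ^ 2
        = x i * c i ^ 2 - (2 * S) * (c i * x i) + S ^ 2 * x i := fun i _ => by ring
    rw [Finset.sum_congr rfl h1, Finset.sum_add_distrib, Finset.sum_sub_distrib,
      ← Finset.mul_sum, ← Finset.mul_sum, hxsum, ← hS]
    ring
  have hE : (∑ i, deriv (fun t => ∑ k, μ k * ((Function.update x i t) k / μ k) ^ (-α)) (x i) *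
        (μ i * (x i / μ i) ^ (-α) / S - x i)) = -(α / S) * T := by
    have h1 : ∀ i ∈ Finset.univ,
        deriv (fun t => ∑ k, μ k * ((Function.update x i t) k / μ k) ^ (-α)) (x i) *
          (μ i * (x i / μ i) ^ (-α) / S - x i)
        = -(α / S) * (x i * c i ^ 2) + α * (c i * x i) := by
      intro i _
      rw [hderiv i, hgc i]
      field_simp
      ring
    rw [Finset.sum_congr rfl h1, Finset.sum_add_distrib, ← Finset.mul_sum, ← Finset.mul_sum,
      ← hS, hTeq]
    field_simp
    ring
  have hTnonneg : 0 ≤ T :=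
    Finset.sum_nonneg fun i _ => mul_nonneg (hxpos i).le (sq_nonneg _)
  rw [hE]
  constructor
  · have : 0 ≤ (α / S) * T := mul_nonneg (div_nonneg hα.le hSpos.le) hTnonneg
    linarith
  · constructor
    · intro h0
      have hT0 : T = 0 := by
        have hαS : α / S ≠ 0 := ne_of_gt (div_pos hα hSpos)
        have : (α / S) * T = 0 := by linarith [h0]
        exact (mul_eq_zero.mp this).resolve_left hαS
      have hall : ∀ i ∈ Finset.univ, x i * (c i - S) ^ 2 = 0 := by
        rw [← Finset.sum_eq_zero_iff_of_nonneg
          (fun i _ => mul_nonneg (hxpos i).le (sq_nonneg _))]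
        exact hT0
      have hci : ∀ i, c i = S := by
        intro i
        have := hall i (Finset.mem_univ i)
        have h2 : (c i - S) ^ 2 = 0 :=
          (mul_eq_zero.mp this).resolve_left (ne_of_gt (hxpos i))
        have := pow_eq_zero_iff (n := 2) (by norm_num) |>.mp h2
        linarith
      have hβ : (-α - 1) ≠ 0 := by linarith
      have hrconst : ∀ i, x i / μ i = S ^ (-α - 1)⁻¹ := by
        intro i
        have h3 : ((x i / μ i) ^ (-α - 1)) ^ (-α - 1)⁻¹ = x i / μ i :=
          Real.rpow_rpow_inv (hr i).le hβ
        rw [← h3]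
        congr 1
        exact hci i
      have hxμ : ∀ i, x i = S ^ (-α - 1)⁻¹ * μ i := by
        intro i
        have := hrconst i
        rw [div_eq_iff (ne_of_gt (hμpos i))] at this
        exact this
      have hκ : S ^ (-α - 1)⁻¹ = 1 := by
        have h4 : (1 : ℝ) = ∑ i, x i := hxsum.symm
        rw [Finset.sum_congr rfl (fun i _ => hxμ i), ← Finset.mul_sum, hμsum, mul_one] at h4
        exact h4.symm
      funext i
      rw [hxμ i, hκ, one_mul]
    · intro hx
      subst hx
      have hc1 : ∀ i, c i = 1 := by
        intro i
        simp only [hc, div_self (ne_of_gt (hμpos i)), Real.one_rpow]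
      have hS1 : S = 1 := by
        rw [hS]
        simp_rw [hc1]
        simpa using hμsum
      have : T = 0 := by
        rw [hTdef]
        apply Finset.sum_eq_zero
        intro i _
        rw [hc1 i, hS1]
        ring
      rw [this]; ring
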